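/- In the q-rook monoid algebra R_k(q), for indices i ≤ j we have P_i P_j = P_j P_i = P_j. -/
import Mathlib


/-- In the q-rook monoid algebra `R_k(q)` (given by its presentation via generators
`P_1,…,P_k`, `T_1,…,T_{k-1}` and relations (A1)-(A3), (R1)-(R5)), for `i ≤ j` we have
`P_i P_j = P_j P_i = P_j`. -/
theorem stmt0 {A : Type*} [Ring A] [Algebra ℂ A] (k : ℕ) (q : ℂ) (hq : q ≠ 0)
    (T P : ℕ → A)
    (hA1 : ∀ i, 1 ≤ i → i + 1 ≤ k → T i * T i = (q - q⁻¹) • T i + 1)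
    (hA2 : ∀ i, 1 ≤ i → i + 2 ≤ k → T i * T (i+1) * T i = T (i+1) * T i * T (i+1))
    (hA3 : ∀ i j, 1 ≤ i → i + 1 < j → j + 1 ≤ k → T i * T j = T j * T i)
    (hR1 : ∀ i, 1 ≤ i → i ≤ k → P i * P i = P i)
    (hR2 : ∀ i j, 1 ≤ i → i ≤ k → 1 ≤ j → j ≤ k → P i * P j = P j * P i)
    (hR3 : ∀ i j, 1 ≤ i → i < j → j + 1 ≤ k → P i * T j = T j * P i)
    (hR4 : ∀ i j, 1 ≤ j → j < i → i ≤ k → P i * T j = q • P i ∧ T j * P i = q • P i)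
    (hR5 : ∀ i, 1 ≤ i → i + 1 ≤ k → P (i+1) = q • (P i * T i * P i - (q - q⁻¹) • P i)) :
    ∀ i j, 1 ≤ i → i ≤ j → j ≤ k → P i * P j = P j ∧ P j * P i = P j := by
  have key : ∀ i j, 1 ≤ i → i ≤ j → j ≤ k → P i * P j = P j := by
    intro i j hi hij hjk
    induction hij with
    | refl => exact hR1 i hi hjk
    | @step m hm ih =>
      have hmk : m ≤ k := le_trans (Nat.le_succ m) hjk
      have hm1 : 1 ≤ m := le_trans hi hm
      have ihm := ih hmk
      rw [hR5 m hm1 hjk, mul_smul_comm, mul_sub, mul_smul_comm,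
        ← mul_assoc, ← mul_assoc, ihm]
  intro i j hi hij hjk
  have h1 := key i j hi hij hjk
  refine ⟨h1, ?_⟩
  rw [← hR2 i j hi (le_trans hij hjk) (le_trans hi hij) hjk, h1]
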